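/- Let {T_n} be the tribonacci numbers and {F_n} the Fibonacci numbers. For every integer n ≥ 2, the Toeplitz–Hessenberg determinant det(1; T_0, T_1, …, T_{n−1}) equals (−1)^{n−1} F_{n−2}. -/

import Mathlib

/-- The determinant of the `n × n` Toeplitz–Hessenberg matrix whose `(i,j)` entry
(0-indexed) is `a (i - j + 1)` when `j ≤ i + 1` (so `a 0` lies on the superdiagonal
and `a k` on the `k`-th subdiagonal) and `0` otherwise. -/
def THdet (a : ℕ → ℤ) (n : ℕ) : ℤ :=
  (Matrix.of fun i j : Fin n => if (j : ℕ) ≤ (i : ℕ) + 1 then a ((i : ℕ) + 1 - (j : ℕ)) else 0).det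

/-- The tribonacci numbers: `T 0 = T 1 = 0`, `T 2 = 1`,
`T n = T (n-1) + T (n-2) + T (n-3)` for `n ≥ 3`. -/
def trib : ℕ → ℤ
  | 0 => 0
  | 1 => 0
  | 2 => 1
  | n + 3 => trib (n + 2) + trib (n + 1) + trib n


def Hmat (b a : ℕ → ℤ) (n : ℕ) : Matrix (Fin n) (Fin n) ℤ :=
  Matrix.of fun i j =>
    if (j : ℕ) = 0 then b (i : ℕ)
    else if (j : ℕ) ≤ (i : ℕ) + 1 then a ((i : ℕ) + 1 - (j : ℕ)) else 0

def Hdet (b a : ℕ → ℤ) (n : ℕ) : ℤ := (Hmat b a n).det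

lemma Hmat_updateColumn (b c a : ℕ → ℤ) (n : ℕ) :
    Hmat b a (n + 1) = (Hmat c a (n + 1)).updateCol 0 (fun i => b (i : ℕ)) := by
  ext i j
  rw [Matrix.updateCol_apply]
  by_cases h : j = 0
  · simp [h, Hmat]
  · have h' : (j : ℕ) ≠ 0 := fun hh => h (Fin.ext hh)
    simp only [Hmat, Matrix.of_apply, if_neg h, if_neg h']

lemma Hdet_add (u v a : ℕ → ℤ) (n : ℕ) :
    Hdet (fun i => u i + v i) a (n + 1) = Hdet u a (n + 1) + Hdet v a (n + 1) := by
  unfold Hdet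
  rw [Hmat_updateColumn (fun i => u i + v i) u a n, Hmat_updateColumn v u a n,
    show ((fun i : Fin (n+1) => u (i:ℕ) + v (i:ℕ))) = (fun i : Fin (n+1) => u (i:ℕ)) + (fun i : Fin (n+1) => v (i:ℕ)) from rfl,
    Matrix.det_updateCol_add]
  congr 2
  rw [← Hmat_updateColumn u u a n]

lemma Hdet_expand (b a : ℕ → ℤ) (n : ℕ) :
    Hdet b a (n + 2) =
      b 0 * Hdet (fun i => a (i + 1)) a (n + 1) - a 0 * Hdet (fun i => b (i + 1)) a (n + 1) := by
  unfold Hdet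
  rw [Matrix.det_succ_row_zero, Fin.sum_univ_succ, Fin.sum_univ_succ]
  have hz : ∀ j : Fin n, Hmat b a (n + 2) 0 j.succ.succ = 0 := by
    intro j
    simp only [Hmat, Matrix.of_apply]
    rw [if_neg (by simp), if_neg (by simp)]
  rw [Finset.sum_eq_zero (fun j _ => by rw [hz j]; ring)]
  have h1 : (Hmat b a (n + 2)).submatrix Fin.succ ((0 : Fin (n+2)).succAbove)
      = Hmat (fun i => a (i + 1)) a (n + 1) := by
    ext i j
    simp only [Matrix.submatrix_apply, Fin.zero_succAbove, Hmat, Matrix.of_apply, Fin.val_succ]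
    by_cases h : (j : ℕ) = 0
    · rw [if_neg (by omega), if_pos (by omega), if_pos h]
      congr 1; omega
    · rw [if_neg (by omega), if_neg h]
      by_cases hle : (j : ℕ) ≤ (i : ℕ) + 1
      · rw [if_pos (by omega), if_pos hle]
        congr 1; omega
      · rw [if_neg (by omega), if_neg hle]
  have h2 : (Hmat b a (n + 2)).submatrix Fin.succ ((Fin.succ 0 : Fin (n+2)).succAbove)
      = Hmat (fun i => b (i + 1)) a (n + 1) := by
    ext i j
    have hs : ((Fin.succ 0 : Fin (n+2)).succAbove j : ℕ) = if (j : ℕ) = 0 then 0 else (j : ℕ) + 1 := by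
      by_cases h : (j : ℕ) = 0
      · rw [if_pos h, Fin.succAbove_of_castSucc_lt _ _ (by simp [Fin.lt_def, h])]
        simpa using h
      · rw [if_neg h, Fin.succAbove_of_le_castSucc _ _ (by simp [Fin.le_def]; omega)]
        simp
    simp only [Matrix.submatrix_apply, Hmat, Matrix.of_apply, Fin.val_succ, hs]
    by_cases h : (j : ℕ) = 0
    · rw [if_pos h, if_pos h, if_pos rfl]
    · rw [if_neg h, if_neg h, if_neg (by omega)]
      by_cases hle : (j : ℕ) ≤ (i : ℕ) + 1
      · rw [if_pos (by omega), if_pos hle]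
        congr 1; omega
      · rw [if_neg (by omega), if_neg hle]
  have e0 : Hmat b a (n + 2) 0 0 = b 0 := by simp [Hmat]
  have e1 : Hmat b a (n + 2) 0 (Fin.succ 0) = a 0 := by
    simp [Hmat]
  rw [h1, h2, e0, e1]
  simp
  ring

def Aa : ℕ → ℤ := fun k => if k = 0 then 1 else trib (k - 1)

lemma THdet_eq_Hdet (n : ℕ) : THdet Aa n = Hdet (fun i => trib i) Aa n := by
  unfold THdet Hdet Hmat
  congr 1
  ext i j
  simp only [Matrix.of_apply]
  by_cases h : (j : ℕ) = 0
  · rw [if_pos (by omega), if_pos h]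
    simp [h, Aa]
  · rw [if_neg h]

def G (s n : ℕ) : ℤ := Hdet (fun i => trib (i + s)) Aa n

lemma G_zero (n : ℕ) : THdet Aa n = G 0 n := by
  rw [THdet_eq_Hdet]; unfold G; congr 1

lemma G_expand (s n : ℕ) : G s (n + 2) = trib s * G 0 (n + 1) - G (s + 1) (n + 1) := by
  unfold G
  rw [Hdet_expand]
  have h1 : (fun i => Aa (i + 1)) = (fun i => trib (i + 0)) := by
    funext i; simp [Aa]
  rw [h1, show Aa 0 = 1 from rfl, one_mul, show trib (0 + s) = trib s by rw [Nat.zero_add]]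
  congr 1
  have h3 : (fun i : ℕ => trib (i + 1 + s)) = (fun i : ℕ => trib (i + (s + 1))) := by
    funext i; congr 1; omega
  rw [h3]

lemma G_lin (s n : ℕ) : G (s + 3) (n + 1) = G (s + 2) (n + 1) + G (s + 1) (n + 1) + G s (n + 1) := by
  unfold G
  have h : (fun i : ℕ => trib (i + (s + 3)))
      = fun i : ℕ => (trib (i + (s + 2)) + trib (i + (s + 1))) + trib (i + s) := by
    funext i
    have : i + (s + 3) = (i + s) + 3 := by ring
    rw [this, trib]
    ring_nf
  rw [h, Hdet_add, Hdet_add]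

lemma g0 (m : ℕ) : G 0 (m + 2) = - G 1 (m + 1) := by
  rw [G_expand]; simp [trib]

lemma g1 (m : ℕ) : G 1 (m + 2) = - G 2 (m + 1) := by
  rw [G_expand]; simp [trib]

lemma g2 (m : ℕ) : G 2 (m + 2) = G 0 (m + 1) - G 3 (m + 1) := by
  rw [G_expand]; simp [trib]

lemma D_rec (n : ℕ) : THdet Aa (n + 4) = THdet Aa (n + 2) - THdet Aa (n + 3) := by
  have el : G 3 (n + 1) = G 2 (n + 1) + G 1 (n + 1) + G 0 (n + 1) := G_lin 0 n
  have a1 : G 0 (n + 4) = - G 1 (n + 3) := g0 (n + 2)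
  have a2 : G 1 (n + 3) = - G 2 (n + 2) := g1 (n + 1)
  have a3 : G 2 (n + 2) = G 0 (n + 1) - G 3 (n + 1) := g2 n
  have a4 : G 0 (n + 3) = - G 1 (n + 2) := g0 (n + 1)
  have a5 : G 1 (n + 2) = - G 2 (n + 1) := g1 n
  have a6 : G 0 (n + 2) = - G 1 (n + 1) := g0 n
  rw [G_zero, G_zero, G_zero]
  linarith

lemma D_base2 : THdet Aa 2 = 0 := by
  simp [THdet, Matrix.det_fin_two, Aa, trib]

lemma D_base3 : THdet Aa 3 = 1 := by
  simp [THdet, Matrix.det_fin_three, Aa, trib]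

lemma D_formula (m : ℕ) : THdet Aa (m + 2) = (-1) ^ (m + 1) * (Nat.fib m : ℤ) := by
  induction m using Nat.strong_induction_on with
  | _ m ih =>
    match m with
    | 0 => simpa using D_base2
    | 1 => simpa using D_base3
    | (k + 2) =>
      rw [show k + 2 + 2 = k + 4 from rfl, D_rec k, ih k (by omega), ih (k + 1) (by omega)]
      rw [Nat.fib_add_two]
      push_cast
      ring

theorem stmt_0 (n : ℕ) (hn : 2 ≤ n) :
    THdet (fun k => if k = 0 then 1 else trib (k - 1)) n =
      (-1) ^ (n - 1) * (Nat.fib (n - 2) : ℤ) := by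
  obtain ⟨m, rfl⟩ : ∃ m, n = m + 2 := ⟨n - 2, by omega⟩
  have := D_formula m
  simpa [Aa, show m + 2 - 1 = m + 1 from rfl] using
    (show THdet (fun k => if k = 0 then 1 else trib (k - 1)) (m + 2) = _ from this)
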